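/- Let E ∈ ℂ^{n×n} be Hermitian positive semidefinite, J ∈ ℂ^{n×n} skew-Hermitian (J* = −J), and τ > 0. Then the matrix (E + τI)⁻¹J is diagonalizable and its eigenvector condition number satisfies κ_V((E + τI)⁻¹J) ≤ κ(E + τI) ≤ (‖E‖ + τ)/τ, where κ(T) = ‖T‖·‖T⁻¹‖. -/

import Mathlib

open Matrix

noncomputable def opN {m : Type*} [Fintype m] [DecidableEq m] (M : Matrix m m ℂ) : ℝ :=
  ‖(Matrix.toEuclideanCLM (𝕜 := ℂ) M : EuclideanSpace ℂ m →L[ℂ] EuclideanSpace ℂ m)‖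

noncomputable def smin {m : Type*} [Fintype m] [DecidableEq m] (M : Matrix m m ℂ) : ℝ :=
  sInf ((fun x : EuclideanSpace ℂ m => ‖Matrix.toEuclideanCLM (𝕜 := ℂ) M x‖) '' {x : EuclideanSpace ℂ m | ‖x‖ = 1})

noncomputable def kappaV {m : Type*} [Fintype m] [DecidableEq m] (X : Matrix m m ℂ) : ℝ :=
  sInf { c : ℝ | ∃ T : Matrix m m ℂ, IsUnit T.det ∧ (T⁻¹ * X * T).IsDiag ∧ c = opN T * opN T⁻¹ }

open scoped ComplexOrder

open scoped Matrix.Norms.L2Operator in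
lemma opN_eq_norm {m : Type*} [Fintype m] [DecidableEq m] (M : Matrix m m ℂ) : opN M = ‖M‖ := rfl

open scoped Matrix.Norms.L2Operator in
lemma aux_norm_one_le {n : ℕ} : ‖(1 : Matrix (Fin n) (Fin n) ℂ)‖ ≤ 1 := by
  rw [Matrix.cstar_norm_def, _root_.map_one]
  exact ContinuousLinearMap.norm_id_le

open scoped Matrix.Norms.L2Operator in
lemma aux_norm_unitary {n : ℕ} (U : Matrix (Fin n) (Fin n) ℂ) (h : star U * U = 1) : ‖U‖ ≤ 1 := by
  have h2 := Matrix.l2_opNorm_conjTranspose_mul_self U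
  rw [← Matrix.star_eq_conjTranspose, h] at h2
  nlinarith [norm_nonneg U, aux_norm_one_le (n := n)]

open scoped Matrix.Norms.L2Operator InnerProductSpace in
lemma aux_inv_norm_le {n : ℕ} (E : Matrix (Fin n) (Fin n) ℂ) (hE : E.PosSemidef) (τ : ℝ)
    (hτ : 0 < τ) (hA : (E + (τ:ℂ) • 1).PosDef) : ‖(E + (τ:ℂ) • 1)⁻¹‖ ≤ 1/τ := by
  set A := E + (τ:ℂ) • 1 with hAdef
  have hAunit : IsUnit A.det := (Matrix.isUnit_iff_isUnit_det _).mp hA.isUnit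
  rw [Matrix.cstar_norm_def]
  apply ContinuousLinearMap.opNorm_le_bound _ (by positivity)
  intro x
  set y : EuclideanSpace ℂ (Fin n) := toEuclideanCLM (𝕜 := ℂ) A⁻¹ x with hy
  have hfy : toEuclideanCLM (𝕜 := ℂ) A y = x := by
    rw [hy, ← ContinuousLinearMap.comp_apply, ← ContinuousLinearMap.mul_def, ← _root_.map_mul,
      Matrix.mul_nonsing_inv _ hAunit, _root_.map_one, ContinuousLinearMap.one_apply]
  have key : τ * ‖y‖^2 ≤ ‖x‖ * ‖y‖ := by
    have h1 : ⟪y, toEuclideanCLM (𝕜 := ℂ) A y⟫_ℂ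
        = star (WithLp.equiv _ _ y) ⬝ᵥ (A *ᵥ (WithLp.equiv _ _ y)) := by
      rw [EuclideanSpace.inner_eq_star_dotProduct, Matrix.ofLp_toEuclideanCLM, dotProduct_comm]
      rfl
    have h2 : star (WithLp.equiv _ _ y) ⬝ᵥ (A *ᵥ (WithLp.equiv _ _ y))
        = star (WithLp.equiv _ _ y) ⬝ᵥ (E *ᵥ (WithLp.equiv _ _ y))
          + (τ:ℂ) * (star (WithLp.equiv _ _ y) ⬝ᵥ (WithLp.equiv _ _ y)) := by
      rw [hAdef, Matrix.add_mulVec, dotProduct_add, Matrix.smul_mulVec,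
        Matrix.one_mulVec, dotProduct_smul]
      simp [smul_eq_mul]
    have h3 : 0 ≤ (star (WithLp.equiv _ _ y) ⬝ᵥ (E *ᵥ (WithLp.equiv _ _ y))).re :=
      hE.re_dotProduct_nonneg _
    have h4 : (star (WithLp.equiv _ _ y) ⬝ᵥ (WithLp.equiv _ _ y)) = (⟪y, y⟫_ℂ) := by
      rw [EuclideanSpace.inner_eq_star_dotProduct]; exact dotProduct_comm _ _
    have h5 : (⟪y, y⟫_ℂ).re = ‖y‖^2 := by
      rw [← RCLike.re_to_complex, inner_self_eq_norm_sq (𝕜 := ℂ)]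
    have h6 : τ * ‖y‖^2 ≤ (⟪y, toEuclideanCLM (𝕜 := ℂ) A y⟫_ℂ).re := by
      rw [h1, h2]
      simp only [Complex.add_re, Complex.mul_re, Complex.ofReal_re, Complex.ofReal_im]
      rw [h4] at *
      have him : (⟪y, y⟫_ℂ).im = 0 := by
        rw [← RCLike.im_to_complex, inner_self_im]
      rw [him, h5]
      linarith
    have h7 : (⟪y, toEuclideanCLM (𝕜 := ℂ) A y⟫_ℂ).re ≤ ‖x‖ * ‖y‖ := by
      calc (⟪y, toEuclideanCLM (𝕜 := ℂ) A y⟫_ℂ).re ≤ ‖⟪y, toEuclideanCLM (𝕜 := ℂ) A y⟫_ℂ‖ :=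
            Complex.re_le_norm _
        _ ≤ ‖y‖ * ‖toEuclideanCLM (𝕜 := ℂ) A y‖ := norm_inner_le_norm _ _
        _ = ‖x‖ * ‖y‖ := by rw [hfy]; ring
    linarith
  rcases eq_or_lt_of_le (norm_nonneg y) with h0 | h0
  · rw [← h0]; positivity
  · have : τ * ‖y‖ ≤ ‖x‖ := by nlinarith
    rw [div_mul_eq_mul_div, le_div_iff₀ hτ]
    nlinarith

open scoped Matrix.Norms.L2Operator
open scoped MatrixOrder

/-- For E PSD, J skew-Hermitian and τ > 0, the matrix (E+τI)⁻¹J is diagonalizable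
and κ_V((E+τI)⁻¹J) ≤ κ(E+τI) ≤ (‖E‖+τ)/τ. -/
theorem stmt7 {n : ℕ} (E J : Matrix (Fin n) (Fin n) ℂ)
    (hE : E.PosSemidef) (hJ : Jᴴ = -J) (τ : ℝ) (hτ : 0 < τ) :
    (∃ T : Matrix (Fin n) (Fin n) ℂ, IsUnit T.det ∧
      (T⁻¹ * ((E + (τ : ℂ) • 1)⁻¹ * J) * T).IsDiag) ∧
    kappaV ((E + (τ : ℂ) • 1)⁻¹ * J) ≤
      opN (E + (τ : ℂ) • 1) * opN (E + (τ : ℂ) • 1)⁻¹ ∧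
    opN (E + (τ : ℂ) • 1) * opN (E + (τ : ℂ) • 1)⁻¹ ≤ (opN E + τ) / τ := by
  have hA : (E + (τ:ℂ) • 1).PosDef := by
    refine Matrix.PosDef.posSemidef_add hE ?_
    rw [Matrix.smul_one_eq_diagonal]
    exact Matrix.posDef_diagonal_iff.mpr fun i => by exact_mod_cast hτ
  set A := E + (τ:ℂ) • 1 with hAdef
  have hAunit : IsUnit A.det := (Matrix.isUnit_iff_isUnit_det _).mp hA.isUnit
  set S := CFC.sqrt A with hSdef
  have hS : S.PosSemidef := (CFC.sqrt_nonneg A).posSemidef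
  have hSH : Sᴴ = S := hS.isHermitian
  have hSS : S * S = A := CFC.sqrt_mul_sqrt_self A hA.posSemidef.nonneg
  have hSunit : IsUnit S.det := by
    have h1 : S.det * S.det = A.det := by rw [← Matrix.det_mul, hSS]
    exact isUnit_of_mul_isUnit_left (h1 ▸ hAunit)
  have hSiH : (S⁻¹)ᴴ = S⁻¹ := by rw [Matrix.conjTranspose_nonsing_inv, hSH]
  have hAinv : A⁻¹ = S⁻¹ * S⁻¹ := by rw [← hSS, Matrix.mul_inv_rev]
  have hSA : S * A⁻¹ = S⁻¹ := by
    rw [hAinv, ← Matrix.mul_assoc, Matrix.mul_nonsing_inv _ hSunit, Matrix.one_mul]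
  set M := S⁻¹ * J * S⁻¹ with hMdef
  have hMskew : Mᴴ = -M := by
    rw [hMdef, Matrix.conjTranspose_mul, Matrix.conjTranspose_mul, hSiH, hJ]
    simp [Matrix.mul_assoc, Matrix.neg_mul, Matrix.mul_neg]
  have hH : (Complex.I • M).IsHermitian := by
    rw [Matrix.IsHermitian, Matrix.conjTranspose_smul, hMskew]
    simp [smul_smul]
  set U : Matrix (Fin n) (Fin n) ℂ := ↑hH.eigenvectorUnitary with hU
  have hUmem : U ∈ Matrix.unitaryGroup (Fin n) ℂ := hH.eigenvectorUnitary.2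
  have hUU : star U * U = 1 := Matrix.mem_unitaryGroup_iff'.mp hUmem
  have hUU' : U * star U = 1 := Matrix.mem_unitaryGroup_iff.mp hUmem
  have hdiag : star (hH.eigenvectorUnitary : Matrix (Fin n) (Fin n) ℂ) * (Complex.I • M) *
      (hH.eigenvectorUnitary : Matrix (Fin n) (Fin n) ℂ) =
      Matrix.diagonal (RCLike.ofReal ∘ hH.eigenvalues) := by
    have := hH.conjStarAlgAut_star_eigenvectorUnitary
    rw [Unitary.conjStarAlgAut_apply] at this
    simpa using this
  have hMU : star U * M * U = (-Complex.I) • Matrix.diagonal (RCLike.ofReal ∘ hH.eigenvalues) := by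
    calc star U * M * U = (-Complex.I) • (star U * (Complex.I • M) * U) := by
          rw [Matrix.mul_smul, Matrix.smul_mul, smul_smul]
          simp [smul_smul]
      _ = (-Complex.I) • Matrix.diagonal (RCLike.ofReal ∘ hH.eigenvalues) := by
          rw [hU, hdiag]
  -- the diagonalizing matrix
  set T := S⁻¹ * U with hT
  have hTdet : IsUnit T.det := by
    rw [hT, Matrix.det_mul]
    exact ((Matrix.isUnit_nonsing_inv_det _ hSunit)).mul
      (IsUnit.of_mul_eq_one _ (by rw [← Matrix.det_mul, hUU', Matrix.det_one]))
  have hTinv : T⁻¹ = star U * S := by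
    apply Matrix.inv_eq_left_inv
    rw [hT, Matrix.mul_assoc, ← Matrix.mul_assoc S S⁻¹ U,
      Matrix.mul_nonsing_inv _ hSunit, Matrix.one_mul, hUU]
  have hTdiag : (T⁻¹ * (A⁻¹ * J) * T).IsDiag := by
    have hkey : ∀ X : Matrix (Fin n) (Fin n) ℂ, S * (A⁻¹ * X) = S⁻¹ * X := fun X => by
      rw [← Matrix.mul_assoc, hSA]
    have : T⁻¹ * (A⁻¹ * J) * T = star U * M * U := by
      rw [hTinv, hT, hMdef]
      simp only [Matrix.mul_assoc]
      rw [hkey]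
    rw [this, hMU]
    intro i j hij
    simp [Matrix.diagonal_apply_ne _ hij]
  refine ⟨⟨T, hTdet, hTdiag⟩, ?_, ?_⟩
  · -- kappaV ≤ ‖A‖ * ‖A⁻¹‖
    have hmem : opN T * opN T⁻¹ ∈
        { c : ℝ | ∃ T' : Matrix (Fin n) (Fin n) ℂ, IsUnit T'.det ∧
          (T'⁻¹ * (A⁻¹ * J) * T').IsDiag ∧ c = opN T' * opN T'⁻¹ } :=
      ⟨T, hTdet, hTdiag, rfl⟩
    have hbdd : BddBelow { c : ℝ | ∃ T' : Matrix (Fin n) (Fin n) ℂ, IsUnit T'.det ∧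
        (T'⁻¹ * (A⁻¹ * J) * T').IsDiag ∧ c = opN T' * opN T'⁻¹ } :=
      ⟨0, fun c ⟨T', _, _, hc⟩ => hc ▸ mul_nonneg (norm_nonneg _) (norm_nonneg _)⟩
    refine le_trans (csInf_le hbdd hmem) ?_
    -- ‖T‖ * ‖T⁻¹‖ ≤ ‖A‖ * ‖A⁻¹‖
    simp only [opN_eq_norm]
    have hUn : ‖U‖ ≤ 1 := aux_norm_unitary U hUU
    have hUn' : ‖star U‖ ≤ 1 := by
      rw [Matrix.star_eq_conjTranspose, Matrix.l2_opNorm_conjTranspose]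
      exact hUn
    have hT1 : ‖T‖ ≤ ‖S⁻¹‖ :=
      le_trans (Matrix.l2_opNorm_mul _ _)
        (by nlinarith [norm_nonneg (S⁻¹ : Matrix (Fin n) (Fin n) ℂ)])
    have hT2 : ‖T⁻¹‖ ≤ ‖S‖ := by
      rw [hTinv]
      refine le_trans (Matrix.l2_opNorm_mul _ _) ?_
      nlinarith [norm_nonneg S, norm_nonneg (star U)]
    have hAS : ‖A‖ = ‖S‖ * ‖S‖ := by
      rw [← hSS]; nth_rewrite 1 [← hSH]
      exact Matrix.l2_opNorm_conjTranspose_mul_self S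
    have hAS' : ‖A⁻¹‖ = ‖S⁻¹‖ * ‖S⁻¹‖ := by
      rw [hAinv]; nth_rewrite 1 [← hSiH]
      exact Matrix.l2_opNorm_conjTranspose_mul_self S⁻¹
    have hx : ‖S‖ * ‖S⁻¹‖ ≤ (‖S‖ * ‖S‖) * (‖S⁻¹‖ * ‖S⁻¹‖) := by
      rcases Nat.eq_zero_or_pos n with hn | hn
      · subst hn
        have : S = 0 := Subsingleton.elim _ _
        simp [this]
      · have hone : ‖(1 : Matrix (Fin n) (Fin n) ℂ)‖ = 1 := by
          haveI : Nonempty (Fin n) := ⟨⟨0, hn⟩⟩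
          haveI : Nontrivial (EuclideanSpace ℂ (Fin n)) := by
            refine ⟨EuclideanSpace.single ⟨0, hn⟩ 1, 0, fun h => ?_⟩
            have := congrArg norm h
            simp [EuclideanSpace.norm_single] at this
          rw [Matrix.cstar_norm_def, _root_.map_one]
          exact ContinuousLinearMap.norm_id
        have h1x : 1 ≤ ‖S‖ * ‖S⁻¹‖ := by
          calc (1:ℝ) = ‖(1 : Matrix (Fin n) (Fin n) ℂ)‖ := hone.symm
            _ = ‖S * S⁻¹‖ := by rw [Matrix.mul_nonsing_inv _ hSunit]
            _ ≤ ‖S‖ * ‖S⁻¹‖ := Matrix.l2_opNorm_mul _ _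
        nlinarith [norm_nonneg S, norm_nonneg (S⁻¹ : Matrix (Fin n) (Fin n) ℂ)]
    calc ‖T‖ * ‖T⁻¹‖ ≤ ‖S⁻¹‖ * ‖S‖ :=
          mul_le_mul hT1 hT2 (norm_nonneg _) (norm_nonneg _)
      _ = ‖S‖ * ‖S⁻¹‖ := mul_comm _ _
      _ ≤ (‖S‖ * ‖S‖) * (‖S⁻¹‖ * ‖S⁻¹‖) := hx
      _ = ‖A‖ * ‖A⁻¹‖ := by rw [hAS, hAS']
  · -- ‖A‖ * ‖A⁻¹‖ ≤ (‖E‖ + τ)/τ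
    simp only [opN_eq_norm]
    have h1 : ‖A‖ ≤ ‖E‖ + τ := by
      refine le_trans (norm_add_le _ _) ?_
      have : ‖((τ:ℂ) • 1 : Matrix (Fin n) (Fin n) ℂ)‖ ≤ τ := by
        rw [norm_smul]
        simp only [Complex.norm_real, Real.norm_eq_abs, abs_of_pos hτ]
        nlinarith [aux_norm_one_le (n := n)]
      linarith
    have h2 : ‖A⁻¹‖ ≤ 1/τ := aux_inv_norm_le E hE τ hτ hA
    calc ‖A‖ * ‖A⁻¹‖ ≤ (‖E‖ + τ) * (1/τ) :=
          mul_le_mul h1 h2 (norm_nonneg _) (by positivity)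
      _ = (‖E‖ + τ) / τ := by ring
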